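/- Let a_i = (c_i,c'_i,q_i,q'_i,m_i,m'_i) and b_i = (d_i,d'_i,p_i,p'_i,n_i,n'_i), i = 1,…,N, be differentiable functions from ℝ⁴ to the twisted algebra, and let D̸ := −i Σ_μ (γ^μ_E⊗I₃₂)·∂_μ act on differentiable ψ : ℝ⁴ → ℂ¹²⁸. Then the free twisted 1-form Σ_i π(a_i)·[D̸, π(b_i)]_ρ is the operator of multiplication by −i Σ_μ (γ^μ_E⊗I₃₂)·A_μ, where A_μ = diag_C(Q_μ, M_μ); Q_μ acts trivially on ṡ and I, Q_μ = diag_s(Q^r_μ, Q^l_μ) with Q^r_μ = diag(c^r_μ, conj(c^r_μ), q^r_μ), Q^l_μ = diag(c^l_μ, conj(c^l_μ), q^l_μ) on the flavour index, where c^r_μ := Σ_i c'_i·∂_μd_i, q^r_μ := Σ_i q_i·∂_μp'_i, c^l_μ := Σ_i c_i·∂_μd'_i, q^l_μ := Σ_i q'_i·∂_μp_i; and M_μ acts trivially on ṡ, M_μ = diag_s(M^r_μ, M^l_μ) with M^r_μ = diag_α(𝗆^r_μ⊗I₂, 𝗆^l_μ⊗I₂), M^l_μ = diag_α(𝗆^l_μ⊗I₂,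 𝗆^r_μ⊗I₂), where 𝗆^r_μ := diag(c^r_μ, m^r_μ), 𝗆^l_μ := diag(c^l_μ, m^l_μ), m^r_μ := Σ_i m'_i·∂_μn_i, m^l_μ := Σ_i m_i·∂_μn'_i. -/

import Mathlib

open Matrix

noncomputable section

namespace TwistSM

/-! ### Dirac matrices -/

def pauli1 : Matrix (Fin 2) (Fin 2) ℂ := !![0, 1; 1, 0]
def pauli2 : Matrix (Fin 2) (Fin 2) ℂ := !![0, -Complex.I; Complex.I, 0]
def pauli3 : Matrix (Fin 2) (Fin 2) ℂ := !![1, 0; 0, -1]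

/-- σ^μ = (I₂, −iσ₁, −iσ₂, −iσ₃) -/
def sigE : Fin 4 → Matrix (Fin 2) (Fin 2) ℂ :=
  ![1, (-Complex.I) • pauli1, (-Complex.I) • pauli2, (-Complex.I) • pauli3]
/-- σ̃^μ = (I₂, iσ₁, iσ₂, iσ₃) -/
def sigTE : Fin 4 → Matrix (Fin 2) (Fin 2) ℂ :=
  ![1, Complex.I • pauli1, Complex.I • pauli2, Complex.I • pauli3]

/-- Diagonal 2×2 block matrix [[A,0],[0,B]] over a leading `Fin 2` index. -/
def dgB {m : Type} (A B : Matrix m m ℂ) : Matrix (Fin 2 × m) (Fin 2 × m) ℂ :=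
  Matrix.of fun p q =>
    if p.1 = q.1 then (if p.1 = 0 then A p.2 q.2 else B p.2 q.2) else 0

/-- Off-diagonal 2×2 block matrix [[0,A],[B,0]] over a leading `Fin 2` index. -/
def odB {m : Type} (A B : Matrix m m ℂ) : Matrix (Fin 2 × m) (Fin 2 × m) ℂ :=
  Matrix.of fun p q =>
    if p.1 = 0 then (if q.1 = 0 then 0 else A p.2 q.2)
    else (if q.1 = 0 then B p.2 q.2 else 0)

/-- Euclidean Dirac matrices γ^μ_E = [[0, σ^μ],[σ̃^μ, 0]], acting on the spinor
indices (s, ṡ). -/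
def gammaE (μ : Fin 4) : Matrix (Fin 2 × Fin 2) (Fin 2 × Fin 2) ℂ := odB (sigE μ) (sigTE μ)

/-- Entrywise complex conjugation of a matrix. -/
def mconj {m n : Type} (A : Matrix m n ℂ) : Matrix m n ℂ := A.map (starRingEnd ℂ)

/-- C = i γ⁰_E γ²_E (the matrix part of the charge conjugation 𝒥 = C ∘ cc). -/
def Kspin : Matrix (Fin 2 × Fin 2) (Fin 2 × Fin 2) ℂ := Complex.I • (gammaE 0 * gammaE 2)

/-! ### The twisted algebra and its representation on ℂ¹²⁸ -/

/-- Quaternionic 2×2 matrices: of the form [[α,β],[−conj β, conj α]]. -/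
def IsQuat (q : Matrix (Fin 2) (Fin 2) ℂ) : Prop :=
  q 1 0 = -(starRingEnd ℂ) (q 0 1) ∧ q 1 1 = (starRingEnd ℂ) (q 0 0)

/-- An element (c, c', q, q', m, m') of the twisted algebra. -/
structure Alg : Type where
  c : ℂ
  c' : ℂ
  q : Matrix (Fin 2) (Fin 2) ℂ
  q' : Matrix (Fin 2) (Fin 2) ℂ
  m : Matrix (Fin 3) (Fin 3) ℂ
  m' : Matrix (Fin 3) (Fin 3) ℂ
  hq : IsQuat q
  hq' : IsQuat q'

/-- The twist ρ: exchange primed and unprimed entries. -/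
def Alg.rho (a : Alg) : Alg := ⟨a.c', a.c, a.q', a.q, a.m', a.m, a.hq', a.hq⟩

/-- Flavour index α, as a pair (flavour pair, index within the pair):
(0,0) = 1̇, (0,1) = 2̇, (1,0) = 1, (1,1) = 2. -/
abbrev Flav : Type := Fin 2 × Fin 2
/-- Internal index (I, α): lepto-colour I ∈ Fin 4 and flavour α. -/
abbrev Intl : Type := Fin 4 × Flav
/-- (ṡ, (I, α)) -/
abbrev HalfNoS : Type := Fin 2 × Intl
/-- Half of the full space: (s, ṡ, (I, α)). -/
abbrev Half : Type := Fin 2 × HalfNoS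
/-- ℂ¹²⁸, indexed by (C, s, ṡ, (I, α)). -/
abbrev Full : Type := Fin 2 × Half

/-- diag(c, conj c) as a 2×2 matrix. -/
def cdiag (c : ℂ) : Matrix (Fin 2) (Fin 2) ℂ := Matrix.diagonal ![c, (starRingEnd ℂ) c]

def pred3 (i : Fin 4) : Fin 3 := ⟨i.val - 1, by have := i.isLt; omega⟩

/-- diag(c, m) as a 4×4 matrix on the lepto-colour index. -/
def sm4 (c : ℂ) (m : Matrix (Fin 3) (Fin 3) ℂ) : Matrix (Fin 4) (Fin 4) ℂ :=
  Matrix.of fun i j =>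
    if i = 0 then (if j = 0 then c else 0)
    else if j = 0 then 0 else m (pred3 i) (pred3 j)

/-- Q_r = diag(c, conj c, q') on the flavour index. -/
def Qr (a : Alg) : Matrix Flav Flav ℂ := dgB (cdiag a.c) a.q'
/-- Q_l = diag(c', conj c', q) on the flavour index. -/
def Ql (a : Alg) : Matrix Flav Flav ℂ := dgB (cdiag a.c') a.q

/-- diag_α(A⊗I₂, B⊗I₂) on (I, α). -/
def msect (A B : Matrix (Fin 4) (Fin 4) ℂ) : Matrix Intl Intl ℂ :=
  Matrix.of fun p q =>
    if p.2 = q.2 then (if p.2.1 = 0 then A p.1 q.1 else B p.1 q.1) else 0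

/-- M_r = diag_α(𝗆⊗I₂, 𝗆'⊗I₂). -/
def Mr (a : Alg) : Matrix Intl Intl ℂ := msect (sm4 a.c a.m) (sm4 a.c' a.m')
/-- M_l = diag_α(𝗆'⊗I₂, 𝗆⊗I₂). -/
def Ml (a : Alg) : Matrix Intl Intl ℂ := msect (sm4 a.c' a.m') (sm4 a.c a.m)

/-- Lift a flavour matrix to (ṡ, (I, α)), acting trivially on ṡ and I. -/
def liftQ (X : Matrix Flav Flav ℂ) : Matrix HalfNoS HalfNoS ℂ :=
  Matrix.of fun p q => if p.1 = q.1 ∧ p.2.1 = q.2.1 then X p.2.2 q.2.2 else 0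

/-- Lift a matrix on (I, α) to (ṡ, (I, α)), acting trivially on ṡ. -/
def liftI (X : Matrix Intl Intl ℂ) : Matrix HalfNoS HalfNoS ℂ :=
  Matrix.of fun p q => if p.1 = q.1 then X p.2 q.2 else 0

/-- The Q-block of the representation: diag_s(Q_r, Q_l), trivial on ṡ and I. -/
def Qmat (a : Alg) : Matrix Half Half ℂ := dgB (liftQ (Qr a)) (liftQ (Ql a))
/-- The M-block of the representation: diag_s(M_r, M_l), trivial on ṡ. -/
def Mmat (a : Alg) : Matrix Half Half ℂ := dgB (liftI (Mr a)) (liftI (Ml a))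

/-- The representation π(a) = diag_C(Q, M) of the twisted algebra on ℂ¹²⁸. -/
def rep (a : Alg) : Matrix Full Full ℂ := dgB (Qmat a) (Mmat a)

/-- Twisted commutator [T, π(b)]_ρ = T·π(b) − π(ρ(b))·T. -/
def tcomm (T : Matrix Full Full ℂ) (b : Alg) : Matrix Full Full ℂ :=
  T * rep b - rep b.rho * T

/-- K = (i γ⁰_E γ²_E) ⊗ ξ ⊗ I₁₆ (with ξ on the internal index C);
the real structure is J = K ∘ cc. -/
def Kmat : Matrix Full Full ℂ :=
  Matrix.of fun p q =>
    (!![0, 1; 1, 0] : Matrix (Fin 2) (Fin 2) ℂ) p.1 q.1 *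
      Kspin (p.2.1, p.2.2.1) (q.2.1, q.2.2.1) *
      (if p.2.2.2 = q.2.2.2 then 1 else 0)

/-- J T J⁻¹ = −K · conj(T) · conj(K) as a matrix operation. -/
def Jconj (T : Matrix Full Full ℂ) : Matrix Full Full ℂ := -(Kmat * mconj T * mconj Kmat)

/-! ### Yukawa and Majorana parts of the Dirac operator -/

/-- 𝗄^I = diag(k_u^I, k_d^I). -/
def kdiag (kν ke ku kd : ℂ) (i : Fin 4) : Matrix (Fin 2) (Fin 2) ℂ :=
  if i = 0 then Matrix.diagonal ![kν, ke] else Matrix.diagonal ![ku, kd]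

/-- Block-diagonal matrix on (I, α) from a family of flavour matrices. -/
def diagI (F : Fin 4 → Matrix Flav Flav ℂ) : Matrix Intl Intl ℂ :=
  Matrix.of fun p q => if p.1 = q.1 then F p.1 p.2 q.2 else 0

/-- The Yukawa mass matrix D₀ = diag_I(D₀^I), D₀^I = [[0, conj 𝗄^I],[𝗄^I, 0]]. -/
def D0 (kν ke ku kd : ℂ) : Matrix Intl Intl ℂ :=
  diagI fun i => odB (mconj (kdiag kν ke ku kd i)) (kdiag kν ke ku kd i)

/-- η ⊗ X, with η = diag_s(1,−1) ⊗ I₂ on (s, ṡ) and X on (I, α). -/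
def etaD (X : Matrix Intl Intl ℂ) : Matrix Half Half ℂ := dgB (liftI X) (liftI (-X))

/-- γ⁵ ⊗ D_Y = diag_C(η⊗D₀, η⊗D₀†). -/
def g5DY (kν ke ku kd : ℂ) : Matrix Full Full ℂ :=
  dgB (etaD (D0 kν ke ku kd)) (etaD ((D0 kν ke ku kd)ᴴ))

/-- Ξ = diag(1,0,0,0)_I ⊗ diag(1,0,0,0)_α on (I, α). -/
def XiI : Matrix Intl Intl ℂ :=
  Matrix.of fun p q =>
    if p = q ∧ p.1 = 0 ∧ p.2 = ((0 : Fin 2), (0 : Fin 2)) then 1 else 0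

/-- γ⁵ ⊗ D_M = [[0, η⊗D_R],[η⊗D_R†, 0]]_C with D_R = k_R Ξ. -/
def g5DM (kR : ℂ) : Matrix Full Full ℂ :=
  odB (etaD (kR • XiI)) (etaD ((kR • XiI)ᴴ))

/-! ### The free 1-form -/

/-- Lift a spinor matrix (on (s, ṡ)) to ℂ¹²⁸, identity on C and (I, α). -/
def liftSpin (G : Matrix (Fin 2 × Fin 2) (Fin 2 × Fin 2) ℂ) : Matrix Full Full ℂ :=
  Matrix.of fun p q =>
    (if p.1 = q.1 ∧ p.2.2.2 = q.2.2.2 then 1 else 0) * G (p.2.1, p.2.2.1) (q.2.1, q.2.2.1)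

/-- Q_μ = diag_s(Q^r_μ, Q^l_μ), Q^{r/l}_μ = diag(c^{r/l}, conj c^{r/l}, q^{r/l}),
trivial on ṡ and I. -/
def freeQ (cr cl : ℂ) (qr ql : Matrix (Fin 2) (Fin 2) ℂ) : Matrix Half Half ℂ :=
  dgB (liftQ (dgB (cdiag cr) qr)) (liftQ (dgB (cdiag cl) ql))

/-- M_μ = diag_s(M^r_μ, M^l_μ), M^r_μ = diag_α(𝗆^r⊗I₂, 𝗆^l⊗I₂), 𝗆^{r/l} = diag(c^{r/l}, m^{r/l}),
trivial on ṡ. -/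
def freeM (cr cl : ℂ) (mr ml : Matrix (Fin 3) (Fin 3) ℂ) : Matrix Half Half ℂ :=
  dgB (liftI (msect (sm4 cr mr) (sm4 cl ml))) (liftI (msect (sm4 cl ml) (sm4 cr mr)))

/-- The free 1-form coefficient matrix A_μ = diag_C(Q_μ, M_μ). -/
def freeA (cr cl : ℂ) (qr ql : Matrix (Fin 2) (Fin 2) ℂ)
    (mr ml : Matrix (Fin 3) (Fin 3) ℂ) : Matrix Full Full ℂ :=
  dgB (freeQ cr cl qr ql) (freeM cr cl mr ml)

/-! ### Partial derivatives -/

/-- Partial derivative in the μ-th coordinate direction of ℝ⁴ (ℂ-valued). -/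
def pdC (μ : Fin 4) (f : (Fin 4 → ℝ) → ℂ) (x : Fin 4 → ℝ) : ℂ :=
  fderiv ℝ f x (Pi.single μ 1)

/-- Partial derivative in the μ-th coordinate direction of ℝ⁴ (ℝ-valued). -/
def pdR (μ : Fin 4) (f : (Fin 4 → ℝ) → ℝ) (x : Fin 4 → ℝ) : ℝ :=
  fderiv ℝ f x (Pi.single μ 1)

/-- Entrywise partial derivative of a matrix-valued function. -/
def pdM {m n : Type} (μ : Fin 4) (F : (Fin 4 → ℝ) → Matrix m n ℂ) (x : Fin 4 → ℝ) :
    Matrix m n ℂ :=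
  Matrix.of fun i j => pdC μ (fun y => F y i j) x


/-- Differentiability of a twisted-algebra-valued function (componentwise). -/
def AlgDiff (f : (Fin 4 → ℝ) → Alg) : Prop :=
  Differentiable ℝ (fun x => (f x).c) ∧ Differentiable ℝ (fun x => (f x).c') ∧
  (∀ k l, Differentiable ℝ fun x => (f x).q k l) ∧
  (∀ k l, Differentiable ℝ fun x => (f x).q' k l) ∧
  (∀ k l, Differentiable ℝ fun x => (f x).m k l) ∧
  (∀ k l, Differentiable ℝ fun x => (f x).m' k l)

/-- The free Dirac operator D̸ = −i Σ_μ (γ^μ_E⊗I₃₂)·∂_μ on ℂ¹²⁸-valued functions. -/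
def Dslash (ψ : (Fin 4 → ℝ) → Full → ℂ) (x : Fin 4 → ℝ) : Full → ℂ :=
  (-Complex.I) • ∑ μ, (liftSpin (gammaE μ)).mulVec fun p => pdC μ (fun y => ψ y p) x


section AuxStruct

/-- Lift a flavour matrix to the internal index, trivial on I. -/
def liftF (X : Matrix Flav Flav ℂ) : Matrix Intl Intl ℂ :=
  Matrix.of fun p q => if p.1 = q.1 then X p.2 q.2 else 0

/-- δ on Intl tensored with a ṡ-matrix. -/
def Kd (S : Matrix (Fin 2) (Fin 2) ℂ) : Matrix HalfNoS HalfNoS ℂ :=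
  Matrix.of fun p q => (if p.2 = q.2 then (1:ℂ) else 0) * S p.1 q.1

def blk4 (A B C D : Matrix Intl Intl ℂ) : Matrix Full Full ℂ :=
  dgB (dgB (liftI A) (liftI B)) (dgB (liftI C) (liftI D))

lemma dgB_mul {m : Type} [Fintype m] (A B A' B' : Matrix m m ℂ) :
    dgB A B * dgB A' B' = dgB (A * A') (B * B') := by
  ext ⟨i, p⟩ ⟨j, q⟩
  simp only [dgB, Matrix.mul_apply, Fintype.sum_prod_type, Matrix.of_apply, Fin.sum_univ_two]
  fin_cases i <;> fin_cases j <;> simp [Matrix.mul_apply]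

lemma odB_mul_dgB {m : Type} [Fintype m] (A B X Y : Matrix m m ℂ) :
    odB A B * dgB X Y = odB (A * Y) (B * X) := by
  ext ⟨i, p⟩ ⟨j, q⟩
  simp only [dgB, odB, Matrix.mul_apply, Fintype.sum_prod_type, Matrix.of_apply, Fin.sum_univ_two]
  fin_cases i <;> fin_cases j <;> simp [Matrix.mul_apply]

lemma dgB_mul_odB {m : Type} [Fintype m] (A B X Y : Matrix m m ℂ) :
    dgB X Y * odB A B = odB (X * A) (Y * B) := by
  ext ⟨i, p⟩ ⟨j, q⟩
  simp only [dgB, odB, Matrix.mul_apply, Fintype.sum_prod_type, Matrix.of_apply, Fin.sum_univ_two]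
  fin_cases i <;> fin_cases j <;> simp [Matrix.mul_apply]

lemma liftI_mul (X Y : Matrix Intl Intl ℂ) : liftI X * liftI Y = liftI (X * Y) := by
  ext ⟨t, p⟩ ⟨t', q⟩
  simp only [liftI, Matrix.mul_apply, Fintype.sum_prod_type, Matrix.of_apply, Fin.sum_univ_two]
  fin_cases t <;> fin_cases t' <;> simp [Matrix.mul_apply]

lemma liftF_mul (X Y : Matrix Flav Flav ℂ) : liftF X * liftF Y = liftF (X * Y) := by
  ext ⟨t, p⟩ ⟨t', q⟩
  simp only [liftF, Matrix.mul_apply, Fintype.sum_prod_type, Matrix.of_apply, Fin.sum_univ_four]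
  fin_cases t <;> fin_cases t' <;> simp [Matrix.mul_apply]

lemma liftQ_eq (X : Matrix Flav Flav ℂ) : liftQ X = liftI (liftF X) := by
  ext ⟨t, i, f⟩ ⟨t', j, g⟩
  simp only [liftQ, liftI, liftF, Matrix.of_apply]
  by_cases h1 : t = t' <;> by_cases h2 : i = j <;> simp [h1, h2]

lemma cdiag_mul (c d : ℂ) : cdiag c * cdiag d = cdiag (c * d) := by
  ext i j
  fin_cases i <;> fin_cases j <;>
    simp [cdiag, Matrix.mul_apply, Fin.sum_univ_two, Matrix.diagonal]

lemma pred3_one : pred3 1 = 0 := rfl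
lemma pred3_two : pred3 2 = 1 := rfl
lemma pred3_three : pred3 3 = 2 := rfl

lemma sm4_mul (c c' : ℂ) (m m' : Matrix (Fin 3) (Fin 3) ℂ) :
    sm4 c m * sm4 c' m' = sm4 (c * c') (m * m') := by
  ext i j
  fin_cases i <;> fin_cases j <;>
    simp [sm4, Matrix.mul_apply, Fin.sum_univ_four, Fin.sum_univ_three,
      pred3_one, pred3_two, pred3_three]

lemma msect_mul (A B A' B' : Matrix (Fin 4) (Fin 4) ℂ) :
    msect A B * msect A' B' = msect (A * A') (B * B') := by
  ext ⟨i, f⟩ ⟨j, g⟩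
  rw [Matrix.mul_apply, Fintype.sum_prod_type]
  simp only [msect, Matrix.of_apply, ite_mul, mul_ite, zero_mul, mul_zero,
    Finset.sum_ite_eq, Finset.mem_univ, if_true]
  by_cases h : f = g
  · subst h
    by_cases h2 : f.1 = 0 <;> simp [h2, Matrix.mul_apply]
  · simp [h, Matrix.mul_apply]

lemma Kd_comm (S : Matrix (Fin 2) (Fin 2) ℂ) (A : Matrix Intl Intl ℂ) :
    Kd S * liftI A = liftI A * Kd S := by
  ext ⟨t, u⟩ ⟨t', u'⟩
  rw [Matrix.mul_apply, Matrix.mul_apply, Fintype.sum_prod_type, Fintype.sum_prod_type]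
  simp only [Kd, liftI, Matrix.of_apply, ite_mul, mul_ite, one_mul, mul_one,
    zero_mul, mul_zero, Finset.sum_ite_eq, Finset.sum_ite_eq', Finset.mem_univ, if_true,
    Fin.sum_univ_two]
  fin_cases t <;> fin_cases t' <;> simp [mul_comm]

lemma liftSpin_odB (S T : Matrix (Fin 2) (Fin 2) ℂ) :
    liftSpin (odB S T) = dgB (odB (Kd S) (Kd T)) (odB (Kd S) (Kd T)) := by
  ext ⟨c1, s1, t1, u1⟩ ⟨c2, s2, t2, u2⟩
  simp only [liftSpin, odB, dgB, Kd, Matrix.of_apply]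
  by_cases h1 : c1 = c2 <;> by_cases h2 : u1 = u2 <;>
    by_cases h3 : s1 = 0 <;> by_cases h4 : s2 = 0 <;> simp [h1, h2, h3, h4]

end AuxStruct
section AuxRep

lemma rep_eq (a : Alg) :
    rep a = blk4 (liftF (Qr a)) (liftF (Ql a)) (Mr a) (Ml a) := by
  unfold rep Qmat Mmat blk4
  rw [liftQ_eq, liftQ_eq]

lemma freeA_eq (cr cl : ℂ) (qr ql : Matrix (Fin 2) (Fin 2) ℂ)
    (mr ml : Matrix (Fin 3) (Fin 3) ℂ) :
    freeA cr cl qr ql mr ml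
      = blk4 (liftF (dgB (cdiag cr) qr)) (liftF (dgB (cdiag cl) ql))
          (msect (sm4 cr mr) (sm4 cl ml)) (msect (sm4 cl ml) (sm4 cr mr)) := by
  unfold freeA freeQ freeM blk4
  rw [liftQ_eq, liftQ_eq]

lemma blk4_mul (A B C D A' B' C' D' : Matrix Intl Intl ℂ) :
    blk4 A B C D * blk4 A' B' C' D'
      = blk4 (A * A') (B * B') (C * C') (D * D') := by
  unfold blk4
  rw [dgB_mul, dgB_mul, dgB_mul, liftI_mul, liftI_mul, liftI_mul, liftI_mul]

lemma swap_gen (S T : Matrix (Fin 2) (Fin 2) ℂ) (A B C D : Matrix Intl Intl ℂ) :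
    liftSpin (odB S T) * blk4 A B C D = blk4 B A D C * liftSpin (odB S T) := by
  rw [liftSpin_odB]
  unfold blk4
  rw [dgB_mul, dgB_mul, odB_mul_dgB, odB_mul_dgB, dgB_mul_odB, dgB_mul_odB,
    Kd_comm, Kd_comm, Kd_comm, Kd_comm]

lemma rho_rho (a : Alg) : a.rho.rho = a := rfl

lemma swap_rep (μ : Fin 4) (c : Alg) :
    liftSpin (gammaE μ) * rep c = rep c.rho * liftSpin (gammaE μ) := by
  have h1 : rep c.rho = blk4 (liftF (Ql c)) (liftF (Qr c)) (Ml c) (Mr c) := rep_eq c.rho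
  rw [rep_eq, h1]
  exact swap_gen (sigE μ) (sigTE μ) _ _ _ _

end AuxRep
section AuxCalc

lemma pdC_const (μ : Fin 4) (c : ℂ) (x : Fin 4 → ℝ) : pdC μ (fun _ => c) x = 0 := by
  simp [pdC]

lemma pdC_conj (μ : Fin 4) (f : (Fin 4 → ℝ) → ℂ) (x : Fin 4 → ℝ) :
    pdC μ (fun y => (starRingEnd ℂ) (f y)) x = (starRingEnd ℂ) (pdC μ f x) := by
  unfold pdC
  have h : (fun y => (starRingEnd ℂ) (f y)) = fun y => star (f y) := rfl
  rw [h, fderiv_star]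
  rfl

lemma pdC_mul (μ : Fin 4) (f g : (Fin 4 → ℝ) → ℂ) (x : Fin 4 → ℝ)
    (hf : DifferentiableAt ℝ f x) (hg : DifferentiableAt ℝ g x) :
    pdC μ (fun y => f y * g y) x = pdC μ f x * g x + f x * pdC μ g x := by
  unfold pdC
  rw [fderiv_fun_mul hf hg]
  simp only [ContinuousLinearMap.add_apply, ContinuousLinearMap.smul_apply, smul_eq_mul]
  ring

lemma pdC_sum {ι : Type*} (s : Finset ι) (μ : Fin 4) (f : ι → (Fin 4 → ℝ) → ℂ)
    (x : Fin 4 → ℝ) (hf : ∀ i ∈ s, DifferentiableAt ℝ (f i) x) :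
    pdC μ (fun y => ∑ i ∈ s, f i y) x = ∑ i ∈ s, pdC μ (f i) x := by
  unfold pdC
  rw [fderiv_fun_sum hf]
  simp

lemma pdM_dgB {m : Type} (μ : Fin 4) (A B : (Fin 4 → ℝ) → Matrix m m ℂ) (x : Fin 4 → ℝ) :
    pdM μ (fun y => dgB (A y) (B y)) x = dgB (pdM μ A x) (pdM μ B x) := by
  ext ⟨i, p⟩ ⟨j, q⟩
  simp only [pdM, dgB, Matrix.of_apply]
  split_ifs <;> simp [pdC_const]

lemma pdM_liftI (μ : Fin 4) (A : (Fin 4 → ℝ) → Matrix Intl Intl ℂ) (x : Fin 4 → ℝ) :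
    pdM μ (fun y => liftI (A y)) x = liftI (pdM μ A x) := by
  ext ⟨t, p⟩ ⟨t', q⟩
  simp only [pdM, liftI, Matrix.of_apply]
  split_ifs <;> simp [pdC_const]

lemma pdM_liftF (μ : Fin 4) (A : (Fin 4 → ℝ) → Matrix Flav Flav ℂ) (x : Fin 4 → ℝ) :
    pdM μ (fun y => liftF (A y)) x = liftF (pdM μ A x) := by
  ext ⟨t, p⟩ ⟨t', q⟩
  simp only [pdM, liftF, Matrix.of_apply]
  split_ifs <;> simp [pdC_const]

lemma pdM_msect (μ : Fin 4) (A B : (Fin 4 → ℝ) → Matrix (Fin 4) (Fin 4) ℂ) (x : Fin 4 → ℝ) :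
    pdM μ (fun y => msect (A y) (B y)) x = msect (pdM μ A x) (pdM μ B x) := by
  ext ⟨i, f⟩ ⟨j, g⟩
  simp only [pdM, msect, Matrix.of_apply]
  split_ifs <;> simp [pdC_const]

lemma pdM_sm4 (μ : Fin 4) (c : (Fin 4 → ℝ) → ℂ) (m : (Fin 4 → ℝ) → Matrix (Fin 3) (Fin 3) ℂ)
    (x : Fin 4 → ℝ) :
    pdM μ (fun y => sm4 (c y) (m y)) x = sm4 (pdC μ c x) (pdM μ m x) := by
  ext i j
  simp only [pdM, sm4, Matrix.of_apply]
  split_ifs <;> simp [pdC_const]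

lemma pdM_cdiag (μ : Fin 4) (c : (Fin 4 → ℝ) → ℂ) (x : Fin 4 → ℝ) :
    pdM μ (fun y => cdiag (c y)) x = cdiag (pdC μ c x) := by
  ext i j
  fin_cases i <;> fin_cases j <;>
    simp [pdM, cdiag, Matrix.diagonal, pdC_const, pdC_conj]

lemma pdM_blk4 (μ : Fin 4) (A B C D : (Fin 4 → ℝ) → Matrix Intl Intl ℂ) (x : Fin 4 → ℝ) :
    pdM μ (fun y => blk4 (A y) (B y) (C y) (D y)) x
      = blk4 (pdM μ A x) (pdM μ B x) (pdM μ C x) (pdM μ D x) := by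
  unfold blk4
  rw [pdM_dgB μ (fun y => dgB (liftI (A y)) (liftI (B y))) (fun y => dgB (liftI (C y)) (liftI (D y))),
    pdM_dgB, pdM_dgB, pdM_liftI, pdM_liftI, pdM_liftI, pdM_liftI]

/-- Derivative of the representation. -/
lemma pd_rep (μ : Fin 4) (b : (Fin 4 → ℝ) → Alg) (x : Fin 4 → ℝ) :
    pdM μ (fun y => rep (b y)) x
      = blk4 (liftF (dgB (cdiag (pdC μ (fun y => (b y).c) x)) (pdM μ (fun y => (b y).q') x)))
             (liftF (dgB (cdiag (pdC μ (fun y => (b y).c') x)) (pdM μ (fun y => (b y).q) x)))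
             (msect (sm4 (pdC μ (fun y => (b y).c) x) (pdM μ (fun y => (b y).m) x))
                    (sm4 (pdC μ (fun y => (b y).c') x) (pdM μ (fun y => (b y).m') x)))
             (msect (sm4 (pdC μ (fun y => (b y).c') x) (pdM μ (fun y => (b y).m') x))
                    (sm4 (pdC μ (fun y => (b y).c) x) (pdM μ (fun y => (b y).m) x))) := by
  simp only [rep_eq, Qr, Ql, Mr, Ml]
  rw [pdM_blk4]
  rw [pdM_liftF, pdM_liftF, pdM_msect, pdM_msect, pdM_dgB, pdM_dgB,
    pdM_cdiag, pdM_cdiag, pdM_sm4, pdM_sm4]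

end AuxCalc
section AuxDiff

lemma diff_dgB {m : Type} {A B : (Fin 4 → ℝ) → Matrix m m ℂ}
    (hA : ∀ p q, Differentiable ℝ fun y => A y p q)
    (hB : ∀ p q, Differentiable ℝ fun y => B y p q) :
    ∀ p q, Differentiable ℝ fun y => dgB (A y) (B y) p q := by
  rintro ⟨i, p⟩ ⟨j, q⟩
  simp only [dgB, Matrix.of_apply]
  split_ifs <;> first | exact hA _ _ | exact hB _ _ | exact differentiable_const 0

lemma diff_liftI {A : (Fin 4 → ℝ) → Matrix Intl Intl ℂ}
    (hA : ∀ p q, Differentiable ℝ fun y => A y p q) :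
    ∀ p q, Differentiable ℝ fun y => liftI (A y) p q := by
  rintro ⟨t, p⟩ ⟨t', q⟩
  simp only [liftI, Matrix.of_apply]
  split_ifs <;> first | exact hA _ _ | exact differentiable_const 0

lemma diff_liftF {A : (Fin 4 → ℝ) → Matrix Flav Flav ℂ}
    (hA : ∀ p q, Differentiable ℝ fun y => A y p q) :
    ∀ p q, Differentiable ℝ fun y => liftF (A y) p q := by
  rintro ⟨t, p⟩ ⟨t', q⟩
  simp only [liftF, Matrix.of_apply]
  split_ifs <;> first | exact hA _ _ | exact differentiable_const 0

lemma diff_msect {A B : (Fin 4 → ℝ) → Matrix (Fin 4) (Fin 4) ℂ}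
    (hA : ∀ p q, Differentiable ℝ fun y => A y p q)
    (hB : ∀ p q, Differentiable ℝ fun y => B y p q) :
    ∀ p q, Differentiable ℝ fun y => msect (A y) (B y) p q := by
  rintro ⟨i, f⟩ ⟨j, g⟩
  simp only [msect, Matrix.of_apply]
  split_ifs <;> first | exact hA _ _ | exact hB _ _ | exact differentiable_const 0

lemma diff_sm4 {c : (Fin 4 → ℝ) → ℂ} {m : (Fin 4 → ℝ) → Matrix (Fin 3) (Fin 3) ℂ}
    (hc : Differentiable ℝ c) (hm : ∀ p q, Differentiable ℝ fun y => m y p q) :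
    ∀ p q, Differentiable ℝ fun y => sm4 (c y) (m y) p q := by
  intro p q
  simp only [sm4, Matrix.of_apply]
  split_ifs <;> first | exact hc | exact hm _ _ | exact differentiable_const 0

lemma diff_cdiag {c : (Fin 4 → ℝ) → ℂ} (hc : Differentiable ℝ c) :
    ∀ p q, Differentiable ℝ fun y => cdiag (c y) p q := by
  intro p q
  fin_cases p <;> fin_cases q <;>
    simp only [cdiag, Matrix.diagonal, Matrix.of_apply, Fin.zero_eta, Fin.mk_one,
      Matrix.cons_val_zero, Matrix.cons_val_one, Matrix.head_cons, if_true, if_false,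
      Fin.isValue, one_ne_zero, zero_ne_one, reduceIte] <;>
    first | exact hc | exact hc.star | exact differentiable_const 0

lemma diff_blk4 {A B C D : (Fin 4 → ℝ) → Matrix Intl Intl ℂ}
    (hA : ∀ p q, Differentiable ℝ fun y => A y p q)
    (hB : ∀ p q, Differentiable ℝ fun y => B y p q)
    (hC : ∀ p q, Differentiable ℝ fun y => C y p q)
    (hD : ∀ p q, Differentiable ℝ fun y => D y p q) :
    ∀ p q, Differentiable ℝ fun y => blk4 (A y) (B y) (C y) (D y) p q := by
  intro p q
  exact diff_dgB (diff_dgB (diff_liftI hA) (diff_liftI hB))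
    (diff_dgB (diff_liftI hC) (diff_liftI hD)) p q

lemma diff_rep {b : (Fin 4 → ℝ) → Alg} (hb : AlgDiff b) :
    ∀ p q, Differentiable ℝ fun y => rep (b y) p q := by
  obtain ⟨h1, h2, h3, h4, h5, h6⟩ := hb
  intro p q
  simp only [rep_eq, Qr, Ql, Mr, Ml]
  exact diff_blk4 (diff_liftF (diff_dgB (diff_cdiag h1) h4))
    (diff_liftF (diff_dgB (diff_cdiag h2) h3))
    (diff_msect (diff_sm4 h1 h5) (diff_sm4 h2 h6))
    (diff_msect (diff_sm4 h2 h6) (diff_sm4 h1 h5)) p q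

end AuxDiff

section AuxVec

lemma mulVec_smulC (A : Matrix Full Full ℂ) (c : ℂ) (v : Full → ℂ) :
    A.mulVec (c • v) = c • A.mulVec v := by
  ext p
  simp [Matrix.mulVec, dotProduct, Finset.mul_sum, mul_left_comm]

lemma mulVec_sumFn {ι : Type*} (A : Matrix Full Full ℂ) (s : Finset ι) (v : ι → Full → ℂ) :
    A.mulVec (∑ i ∈ s, v i) = ∑ i ∈ s, A.mulVec (v i) := by
  ext p
  simp [Matrix.mulVec, dotProduct, Finset.mul_sum]
  rw [Finset.sum_comm]

lemma sum_mulVecC {ι : Type*} (s : Finset ι) (A : ι → Matrix Full Full ℂ) (v : Full → ℂ) :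
    (∑ i ∈ s, A i).mulVec v = ∑ i ∈ s, (A i).mulVec v := by
  ext p
  simp [Matrix.mulVec, dotProduct, Finset.sum_mul, Matrix.sum_apply]
  rw [Finset.sum_comm]

/-- Leibniz rule for mulVec. -/
lemma pd_mulVec (μ : Fin 4) (M : (Fin 4 → ℝ) → Matrix Full Full ℂ)
    (ψ : (Fin 4 → ℝ) → Full → ℂ) (x : Fin 4 → ℝ)
    (hM : ∀ p q, DifferentiableAt ℝ (fun y => M y p q) x)
    (hψ : ∀ p, DifferentiableAt ℝ (fun y => ψ y p) x) :
    (fun p => pdC μ (fun y => (M y).mulVec (ψ y) p) x)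
      = (pdM μ M x).mulVec (ψ x) + (M x).mulVec (fun r => pdC μ (fun y => ψ y r) x) := by
  funext p
  simp only [Matrix.mulVec, dotProduct]
  rw [pdC_sum Finset.univ μ (fun r y => M y p r * ψ y r) x
    (fun r _ => (hM p r).mul (hψ r))]
  have h : ∀ r, pdC μ (fun y => M y p r * ψ y r) x
      = pdC μ (fun y => M y p r) x * ψ x r + M x p r * pdC μ (fun y => ψ y r) x :=
    fun r => pdC_mul μ _ _ x (hM p r) (hψ r)
  simp only [h]
  rw [Finset.sum_add_distrib]
  rfl

end AuxVec
section AuxKey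

lemma key (a0 : Alg) (b : (Fin 4 → ℝ) → Alg) (hb : AlgDiff b)
    (ψ : (Fin 4 → ℝ) → Full → ℂ) (hψ : ∀ p, Differentiable ℝ fun x => ψ x p)
    (x : Fin 4 → ℝ) :
    (rep a0).mulVec (Dslash (fun y => (rep (b y)).mulVec (ψ y)) x
        - (rep ((b x).rho)).mulVec (Dslash ψ x))
      = (-Complex.I) • ∑ μ, (liftSpin (gammaE μ)).mulVec
          ((rep a0.rho * pdM μ (fun y => rep (b y)) x).mulVec (ψ x)) := by
  have hM : ∀ p q, DifferentiableAt ℝ (fun y => rep (b y) p q) x :=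
    fun p q => (diff_rep hb p q) x
  have hψ' : ∀ p, DifferentiableAt ℝ (fun y => ψ y p) x := fun p => (hψ p) x
  have step1 : Dslash (fun y => (rep (b y)).mulVec (ψ y)) x
      - (rep ((b x).rho)).mulVec (Dslash ψ x)
      = (-Complex.I) • ∑ μ, (liftSpin (gammaE μ)).mulVec
          ((pdM μ (fun y => rep (b y)) x).mulVec (ψ x)) := by
    unfold Dslash
    have h2 : ∀ μ : Fin 4, (liftSpin (gammaE μ)).mulVec
        (fun p => pdC μ (fun y => (rep (b y)).mulVec (ψ y) p) x)
        = (liftSpin (gammaE μ)).mulVec ((pdM μ (fun y => rep (b y)) x).mulVec (ψ x))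
          + (rep ((b x).rho)).mulVec ((liftSpin (gammaE μ)).mulVec
              (fun r => pdC μ (fun y => ψ y r) x)) := by
      intro μ
      rw [pd_mulVec μ _ ψ x hM hψ', Matrix.mulVec_add]
      congr 1
      rw [Matrix.mulVec_mulVec, swap_rep μ (b x), ← Matrix.mulVec_mulVec]
    simp only [h2]
    rw [Finset.sum_add_distrib, smul_add, ← mulVec_sumFn, ← mulVec_smulC,
      add_sub_cancel_right]
  rw [step1, mulVec_smulC, mulVec_sumFn]
  congr 1
  refine Finset.sum_congr rfl fun μ _ => ?_
  have hsw : rep a0 * liftSpin (gammaE μ) = liftSpin (gammaE μ) * rep a0.rho := by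
    have h := swap_rep μ a0.rho
    rw [rho_rho] at h
    exact h.symm
  rw [Matrix.mulVec_mulVec, Matrix.mulVec_mulVec, Matrix.mulVec_mulVec,
    ← mul_assoc, hsw, mul_assoc]

end AuxKey

section AuxSum

lemma dgB_sum {m : Type} {ι : Type*} (s : Finset ι) (A B : ι → Matrix m m ℂ) :
    ∑ i ∈ s, dgB (A i) (B i) = dgB (∑ i ∈ s, A i) (∑ i ∈ s, B i) := by
  ext ⟨i, p⟩ ⟨j, q⟩
  simp only [Matrix.sum_apply, dgB, Matrix.of_apply]
  split_ifs <;> simp [Matrix.sum_apply]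

lemma liftI_sum {ι : Type*} (s : Finset ι) (A : ι → Matrix Intl Intl ℂ) :
    ∑ i ∈ s, liftI (A i) = liftI (∑ i ∈ s, A i) := by
  ext ⟨t, p⟩ ⟨t', q⟩
  simp only [Matrix.sum_apply, liftI, Matrix.of_apply]
  split_ifs <;> simp [Matrix.sum_apply]

lemma liftF_sum {ι : Type*} (s : Finset ι) (A : ι → Matrix Flav Flav ℂ) :
    ∑ i ∈ s, liftF (A i) = liftF (∑ i ∈ s, A i) := by
  ext ⟨t, p⟩ ⟨t', q⟩
  simp only [Matrix.sum_apply, liftF, Matrix.of_apply]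
  split_ifs <;> simp [Matrix.sum_apply]

lemma msect_sum {ι : Type*} (s : Finset ι) (A B : ι → Matrix (Fin 4) (Fin 4) ℂ) :
    ∑ i ∈ s, msect (A i) (B i) = msect (∑ i ∈ s, A i) (∑ i ∈ s, B i) := by
  ext ⟨i, f⟩ ⟨j, g⟩
  simp only [Matrix.sum_apply, msect, Matrix.of_apply]
  split_ifs <;> simp [Matrix.sum_apply]

lemma sm4_sum {ι : Type*} (s : Finset ι) (c : ι → ℂ) (m : ι → Matrix (Fin 3) (Fin 3) ℂ) :
    ∑ i ∈ s, sm4 (c i) (m i) = sm4 (∑ i ∈ s, c i) (∑ i ∈ s, m i) := by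
  ext p q
  simp only [Matrix.sum_apply, sm4, Matrix.of_apply]
  split_ifs <;> simp [Matrix.sum_apply]

lemma cdiag_sum {ι : Type*} (s : Finset ι) (c : ι → ℂ) :
    ∑ i ∈ s, cdiag (c i) = cdiag (∑ i ∈ s, c i) := by
  ext p q
  fin_cases p <;> fin_cases q <;>
    simp [cdiag, Matrix.diagonal, Matrix.sum_apply, map_sum]

lemma blk4_sum {ι : Type*} (s : Finset ι) (A B C D : ι → Matrix Intl Intl ℂ) :
    ∑ i ∈ s, blk4 (A i) (B i) (C i) (D i)
      = blk4 (∑ i ∈ s, A i) (∑ i ∈ s, B i) (∑ i ∈ s, C i) (∑ i ∈ s, D i) := by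
  unfold blk4
  rw [dgB_sum, dgB_sum, dgB_sum, liftI_sum, liftI_sum, liftI_sum, liftI_sum]

end AuxSum

/-- the free twisted 1-form Σᵢ π(aᵢ)·[D̸, π(bᵢ)]_ρ is multiplication by
−i Σ_μ (γ^μ_E⊗I₃₂)·A_μ, where A_μ has the free 1-form block structure with components
c^r_μ = Σᵢ c'ᵢ ∂_μdᵢ, c^l_μ = Σᵢ cᵢ ∂_μd'ᵢ, q^r_μ = Σᵢ qᵢ ∂_μp'ᵢ, q^l_μ = Σᵢ q'ᵢ ∂_μpᵢ,
m^r_μ = Σᵢ m'ᵢ ∂_μnᵢ, m^l_μ = Σᵢ mᵢ ∂_μn'ᵢ. -/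
theorem statement11 (N : ℕ) (a b : Fin N → (Fin 4 → ℝ) → Alg)
    (hb : ∀ i, AlgDiff (b i))
    (ψ : (Fin 4 → ℝ) → Full → ℂ)
    (hψ : ∀ p, Differentiable ℝ fun x => ψ x p)
    (x : Fin 4 → ℝ) :
    (∑ i, (rep (a i x)).mulVec
        (Dslash (fun y => (rep (b i y)).mulVec (ψ y)) x
          - (rep ((b i x).rho)).mulVec (Dslash ψ x)))
      = (-Complex.I) • ∑ μ, (liftSpin (gammaE μ)).mulVec
          ((freeA (∑ i, (a i x).c' * pdC μ (fun y => (b i y).c) x)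
                  (∑ i, (a i x).c * pdC μ (fun y => (b i y).c') x)
                  (∑ i, (a i x).q * pdM μ (fun y => (b i y).q') x)
                  (∑ i, (a i x).q' * pdM μ (fun y => (b i y).q) x)
                  (∑ i, (a i x).m' * pdM μ (fun y => (b i y).m) x)
                  (∑ i, (a i x).m * pdM μ (fun y => (b i y).m') x)).mulVec (ψ x)) := by
  have hk : ∀ i, (rep (a i x)).mulVec
      (Dslash (fun y => (rep (b i y)).mulVec (ψ y)) x
        - (rep ((b i x).rho)).mulVec (Dslash ψ x))
      = (-Complex.I) • ∑ μ, (liftSpin (gammaE μ)).mulVec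
          ((rep (a i x).rho * pdM μ (fun y => rep (b i y)) x).mulVec (ψ x)) :=
    fun i => key (a i x) (b i) (hb i) ψ hψ x
  simp only [hk]
  rw [← Finset.smul_sum, Finset.sum_comm]
  congr 1
  refine Finset.sum_congr rfl fun μ _ => ?_
  have hι : ∀ i : Fin N, rep (a i x).rho * pdM μ (fun y => rep (b i y)) x
      = blk4
          (liftF (dgB (cdiag ((a i x).c' * pdC μ (fun y => (b i y).c) x))
            ((a i x).q * pdM μ (fun y => (b i y).q') x)))
          (liftF (dgB (cdiag ((a i x).c * pdC μ (fun y => (b i y).c') x))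
            ((a i x).q' * pdM μ (fun y => (b i y).q) x)))
          (msect (sm4 ((a i x).c' * pdC μ (fun y => (b i y).c) x)
              ((a i x).m' * pdM μ (fun y => (b i y).m) x))
            (sm4 ((a i x).c * pdC μ (fun y => (b i y).c') x)
              ((a i x).m * pdM μ (fun y => (b i y).m') x)))
          (msect (sm4 ((a i x).c * pdC μ (fun y => (b i y).c') x)
              ((a i x).m * pdM μ (fun y => (b i y).m') x))
            (sm4 ((a i x).c' * pdC μ (fun y => (b i y).c) x)
              ((a i x).m' * pdM μ (fun y => (b i y).m) x))) := by
    intro i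
    rw [pd_rep, rep_eq]
    have e1 : Qr ((a i x).rho) = dgB (cdiag (a i x).c') (a i x).q := rfl
    have e2 : Ql ((a i x).rho) = dgB (cdiag (a i x).c) (a i x).q' := rfl
    have e3 : Mr ((a i x).rho)
        = msect (sm4 (a i x).c' (a i x).m') (sm4 (a i x).c (a i x).m) := rfl
    have e4 : Ml ((a i x).rho)
        = msect (sm4 (a i x).c (a i x).m) (sm4 (a i x).c' (a i x).m') := rfl
    rw [e1, e2, e3, e4, blk4_mul, liftF_mul, liftF_mul, dgB_mul, dgB_mul,
      cdiag_mul, cdiag_mul, msect_mul, msect_mul, sm4_mul, sm4_mul]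
  simp only [hι]
  rw [← mulVec_sumFn, ← sum_mulVecC, blk4_sum, liftF_sum, liftF_sum, dgB_sum, dgB_sum,
    cdiag_sum, cdiag_sum, msect_sum, msect_sum, sm4_sum, sm4_sum, freeA_eq]


end TwistSM
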